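/- arXiv:2102.05226 — 5 statements merged into one kernel-verified Lean document; each statement's English description precedes it below -/
import Mathlib

section
/- Let S > 1 and k > 0 be reals and let 0 < f₀ < f₁. Let x, y : ℝ → ℝ be such that for every f ∈ [f₀, f₁]: (i) 0 < y(f) < 1 and x(f) < y(f); (ii) x has derivative (y(f) − x(f))/f at f; (iii) y is differentiable at f; and (iv) the crossflow flux relation (y(f) − x(f))·(S − (S−1)·y(f)) = k·(S−1)²·y(f)·(1 − y(f)) holds. Then S·ln(y(f₀)/y(f₁)) − ln((1 − y(f₀))/(1 − y(f₁))) − k·(S−1)²·ln((y(f₀) − x(f₀))/(y(f₁) − x(f₁))) = k·(S−1)²·ln(f₀/f₁). -/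
theorem stmt_1
    (S k f₀ f₁ : ℝ) (hS : 1 < S) (hk : 0 < k)
    (hf₀ : 0 < f₀) (hf : f₀ < f₁)
    (x y : ℝ → ℝ)
    (hy : ∀ f ∈ Set.Icc f₀ f₁, 0 < y f ∧ y f < 1)
    (hxy : ∀ f ∈ Set.Icc f₀ f₁, x f < y f)
    (hx' : ∀ f ∈ Set.Icc f₀ f₁, HasDerivAt x ((y f - x f) / f) f)
    (hydiff : ∀ f ∈ Set.Icc f₀ f₁, DifferentiableAt ℝ y f)
    (hflux : ∀ f ∈ Set.Icc f₀ f₁,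
      (y f - x f) * (S - (S - 1) * y f) = k * (S - 1) ^ 2 * y f * (1 - y f)) :
    S * Real.log (y f₀ / y f₁) - Real.log ((1 - y f₀) / (1 - y f₁))
      - k * (S - 1) ^ 2 * Real.log ((y f₀ - x f₀) / (y f₁ - x f₁))
      = k * (S - 1) ^ 2 * Real.log (f₀ / f₁) := by
  have hf₁ : 0 < f₁ := hf₀.trans hf
  set G : ℝ → ℝ := fun f => S * Real.log (y f) - Real.log (1 - y f)
      - k * (S - 1) ^ 2 * Real.log (y f - x f) - k * (S - 1) ^ 2 * Real.log f with hGdef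
  have hderiv : ∀ f ∈ Set.Icc f₀ f₁, HasDerivAt G 0 f := by
    intro f hfm
    obtain ⟨hfl, hfr⟩ := hfm
    have hfpos : 0 < f := lt_of_lt_of_le hf₀ hfl
    obtain ⟨hy0, hy1⟩ := hy f ⟨hfl, hfr⟩
    have hyx : 0 < y f - x f := sub_pos.2 (hxy f ⟨hfl, hfr⟩)
    have h1y : 0 < 1 - y f := sub_pos.2 hy1
    have hv : HasDerivAt y (deriv y f) f := (hydiff f ⟨hfl, hfr⟩).hasDerivAt
    have h1 : HasDerivAt (fun t => Real.log (y t)) (deriv y f / y f) f :=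
      hv.log hy0.ne'
    have h2 : HasDerivAt (fun t => Real.log (1 - y t)) ((0 - deriv y f) / (1 - y f)) f :=
      ((hasDerivAt_const f (1 : ℝ)).sub hv).log h1y.ne'
    have h3 : HasDerivAt (fun t => Real.log (y t - x t))
        ((deriv y f - (y f - x f) / f) / (y f - x f)) f :=
      (hv.sub (hx' f ⟨hfl, hfr⟩)).log hyx.ne'
    have h4 : HasDerivAt Real.log f⁻¹ f := Real.hasDerivAt_log hfpos.ne'
    have h5 := (((h1.const_mul S).sub h2).sub (h3.const_mul (k * (S - 1) ^ 2))).sub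
      (h4.const_mul (k * (S - 1) ^ 2))
    convert h5 using 1
    · rfl
    · rfl
    · rfl
    have key := hflux f ⟨hfl, hfr⟩
    field_simp
    linear_combination (-f * deriv y f) * key
  have hcont : ContinuousOn G (Set.Icc f₀ f₁) := fun f hfm =>
    ((hderiv f hfm).continuousAt).continuousWithinAt
  have hGeq : G f₁ = G f₀ :=
    constant_of_has_deriv_right_zero hcont
      (fun f hfm => (hderiv f ⟨hfm.1, hfm.2.le⟩).hasDerivWithinAt) f₁
      (Set.right_mem_Icc.2 hf.le)
  obtain ⟨hy00, hy01⟩ := hy f₀ (Set.left_mem_Icc.2 hf.le)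
  obtain ⟨hy10, hy11⟩ := hy f₁ (Set.right_mem_Icc.2 hf.le)
  have hyx0 : 0 < y f₀ - x f₀ := sub_pos.2 (hxy f₀ (Set.left_mem_Icc.2 hf.le))
  have hyx1 : 0 < y f₁ - x f₁ := sub_pos.2 (hxy f₁ (Set.right_mem_Icc.2 hf.le))
  rw [Real.log_div hy00.ne' hy10.ne', Real.log_div (sub_pos.2 hy01).ne' (sub_pos.2 hy11).ne',
    Real.log_div hyx0.ne' hyx1.ne', Real.log_div hf₀.ne' hf₁.ne']
  simp only [hGdef] at hGeq
  linarith [hGeq]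
end

section
/- Let S, k, y be reals with k ≥ 0, y > 0 and S − (S−1)·y ≠ 0, and define X : ℝ → ℝ by X(t) = t − k·(1 + (S−1)·t − S/(S − (S−1)·t)). If X(y) > 0, then the derivative of X at y, namely 1 − k·(S−1) + k·S·(S−1)/(S − (S−1)·y)², is strictly positive. -/
theorem stmt_6
    (S k y : ℝ) (hk : 0 ≤ k) (hy : 0 < y) (hden : S - (S - 1) * y ≠ 0)
    (X : ℝ → ℝ)
    (hX : X = fun t => t - k * (1 + (S - 1) * t - S / (S - (S - 1) * t)))
    (hXy : 0 < X y) :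
    0 < 1 - k * (S - 1) + k * S * (S - 1) / (S - (S - 1) * y) ^ 2 := by
  have hd2 : (0:ℝ) < (S - (S - 1) * y) ^ 2 := pow_two_pos_of_ne_zero hden
  have key : 1 - k * (S - 1) + k * S * (S - 1) / (S - (S - 1) * y) ^ 2
      = (X y + k * (S - 1) ^ 2 * y ^ 2 / (S - (S - 1) * y) ^ 2) / y := by
    subst hX
    field_simp
    ring
  rw [key]
  exact div_pos (add_pos_of_pos_of_nonneg hXy (by positivity)) hy
end

section
/- Let S > 1 and x be reals, let U ⊆ ℝ be an open set containing u₀, and let y, k : ℝ → ℝ satisfy, for every u ∈ U, the relation (y(u) − x)·(S − (S−1)·y(u)) = k(u)·(S−1)²·y(u)·(1 − y(u)), with 0 < y(u₀) < 1. If y has derivative y′ at u₀ and k has derivative k′ at u₀, then y′·( S·x/y(u₀)² + (1−x)/(1−y(u₀))² ) = k′·(S−1)². -/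
theorem stmt_11
    (S x : ℝ) (hS : 1 < S)
    (U : Set ℝ) (hU : IsOpen U) (u₀ : ℝ) (hu₀ : u₀ ∈ U)
    (y k : ℝ → ℝ)
    (hrel : ∀ u ∈ U,
      (y u - x) * (S - (S - 1) * y u) = k u * (S - 1) ^ 2 * y u * (1 - y u))
    (hy0 : 0 < y u₀) (hy1 : y u₀ < 1)
    (y' k' : ℝ)
    (hy' : HasDerivAt y y' u₀) (hk' : HasDerivAt k k' u₀) :
    y' * (S * x / (y u₀) ^ 2 + (1 - x) / (1 - y u₀) ^ 2) = k' * (S - 1) ^ 2 := by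
  have hycont : ContinuousAt y u₀ := hy'.continuousAt
  -- neighborhood where 0 < y u < 1 and u ∈ U
  have h1 : ∀ᶠ u in nhds u₀, 0 < y u := continuousAt_const.eventually_lt hycont hy0
  have h2 : ∀ᶠ u in nhds u₀, y u < 1 := hycont.eventually_lt continuousAt_const hy1
  have hUmem : ∀ᶠ u in nhds u₀, u ∈ U := hU.mem_nhds hu₀
  set g : ℝ → ℝ := fun u => (S - 1) - S * x / (y u) + (1 - x) / (1 - y u) with hg
  have heq : g =ᶠ[nhds u₀] fun u => k u * (S - 1) ^ 2 := by
    filter_upwards [h1, h2, hUmem] with u hu1 hu2 huU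
    have hne1 : y u ≠ 0 := ne_of_gt hu1
    have hne2 : (1 : ℝ) - y u ≠ 0 := by linarith
    have hr := hrel u huU
    simp only [hg]
    field_simp
    nlinarith [hr]
  have hgderiv : HasDerivAt g (y' * (S * x / (y u₀) ^ 2 + (1 - x) / (1 - y u₀) ^ 2)) u₀ := by
    have hne1 : y u₀ ≠ 0 := ne_of_gt hy0
    have hne2 : (1 : ℝ) - y u₀ ≠ 0 := by linarith
    have d1 : HasDerivAt (fun u => S * x / (y u)) (-(S * x * y') / (y u₀) ^ 2) u₀ := by
      have := (hy'.inv hne1).const_mul (S * x)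
      convert this using 1
      · rfl
      · rfl
      · rfl
      · ring
    have d2 : HasDerivAt (fun u => (1 - x) / (1 - y u)) ((1 - x) * y' / (1 - y u₀) ^ 2) u₀ := by
      have hy2 : HasDerivAt (fun u => 1 - y u) (-y') u₀ := ((hasDerivAt_const u₀ (1:ℝ)).sub hy').congr_deriv (zero_sub y')
      have := (hy2.inv hne2).const_mul (1 - x)
      convert this using 1
      · rfl
      · rfl
      · rfl
      · ring
    have := ((hasDerivAt_const u₀ (S - 1)).sub d1).add d2
    convert this using 1
    · rfl
    · rfl
    · rfl
    · field_simp
      ring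
  have hkderiv : HasDerivAt (fun u => k u * (S - 1) ^ 2) (k' * (S - 1) ^ 2) u₀ :=
    hk'.mul_const _
  have := (hgderiv.congr_of_eventuallyEq heq.symm).unique hkderiv
  linarith [this]
end

section
/- Let S > 1 and x ∈ [0,1] be reals, let U ⊆ ℝ be an open set containing u₀, and let y, k : ℝ → ℝ satisfy, for every u ∈ U, the relation (y(u) − x)·(S − (S−1)·y(u)) = k(u)·(S−1)²·y(u)·(1 − y(u)), with 0 < y(u₀) < 1. If y has derivative y′ at u₀ and k has derivative k′ at u₀ with k′ ≥ 0, then y′ ≥ 0. -/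
theorem stmt_12
    (S x : ℝ) (hS : 1 < S) (hx0 : 0 ≤ x) (hx1 : x ≤ 1)
    (U : Set ℝ) (hU : IsOpen U) (u₀ : ℝ) (hu₀ : u₀ ∈ U)
    (y k : ℝ → ℝ)
    (hrel : ∀ u ∈ U,
      (y u - x) * (S - (S - 1) * y u) = k u * (S - 1) ^ 2 * y u * (1 - y u))
    (hy0 : 0 < y u₀) (hy1 : y u₀ < 1)
    (y' k' : ℝ)
    (hy' : HasDerivAt y y' u₀) (hk' : HasDerivAt k k' u₀) (hk'0 : 0 ≤ k') :
    0 ≤ y' := by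
  set a := y u₀ with ha
  set c := k u₀ with hc
  have hrel₀ : (a - x) * (S - (S - 1) * a) = c * (S - 1) ^ 2 * a * (1 - a) :=
    hrel u₀ hu₀
  have h1a : (0:ℝ) < 1 - a := by linarith
  set g : ℝ → ℝ := fun u =>
    (y u - x) * (S - (S - 1) * y u) - k u * (S - 1) ^ 2 * y u * (1 - y u) with hg
  have hf1 : HasDerivAt (fun u => (y u - x) * (S - (S - 1) * y u))
      (y' * (S - (S - 1) * a) + (a - x) * (-((S - 1) * y'))) u₀ :=
    (hy'.sub_const x).mul ((hy'.const_mul (S - 1)).const_sub S)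
  have hf2 : HasDerivAt (fun u => k u * (S - 1) ^ 2 * y u * (1 - y u))
      ((k' * (S - 1) ^ 2 * a + c * (S - 1) ^ 2 * y') * (1 - a)
        + c * (S - 1) ^ 2 * a * (-y')) u₀ :=
    (((hk'.mul_const ((S - 1) ^ 2)).mul hy').mul (hy'.const_sub 1))
  have hD : HasDerivAt g
      (y' * (S - (S - 1) * a) + (a - x) * (-((S - 1) * y'))
        - ((k' * (S - 1) ^ 2 * a + c * (S - 1) ^ 2 * y') * (1 - a)
            + c * (S - 1) ^ 2 * a * (-y'))) u₀ := hf1.sub hf2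
  have hzero : g =ᶠ[nhds u₀] (fun _ => (0:ℝ)) := by
    filter_upwards [hU.mem_nhds hu₀] with u hu
    have := hrel u hu
    simp [hg, this]
  have hD0 : HasDerivAt g 0 u₀ :=
    (hasDerivAt_const u₀ (0:ℝ)).congr_of_eventuallyEq hzero
  have heq : y' * (S - (S - 1) * a) + (a - x) * (-((S - 1) * y'))
        - ((k' * (S - 1) ^ 2 * a + c * (S - 1) ^ 2 * y') * (1 - a)
            + c * (S - 1) ^ 2 * a * (-y')) = 0 :=
    hD.unique hD0
  have hy'A : y' * ((S - (S - 1) * a) - (S - 1) * (a - x) - c * (S - 1) ^ 2 * (1 - 2 * a))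
      = k' * (S - 1) ^ 2 * (a * (1 - a)) := by linear_combination heq
  have hA : ((S - (S - 1) * a) - (S - 1) * (a - x) - c * (S - 1) ^ 2 * (1 - 2 * a))
      * (a * (1 - a)) = S * x * (1 - a) ^ 2 + (1 - x) * a ^ 2 := by
    linear_combination (1 - 2 * a) * hrel₀
  have h2 : 0 < S * x * (1 - a) ^ 2 + (1 - x) * a ^ 2 := by
    rcases hx0.lt_or_eq with h | h
    · have p1 : 0 < S * x * (1 - a) ^ 2 := by positivity
      have p2 : 0 ≤ (1 - x) * a ^ 2 := mul_nonneg (by linarith) (sq_nonneg a)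
      linarith
    · have hx : x = 0 := h.symm
      have p2 : 0 < (1 - x) * a ^ 2 := by rw [hx]; simpa using pow_pos hy0 2
      have p1 : 0 ≤ S * x * (1 - a) ^ 2 :=
        mul_nonneg (mul_nonneg (by linarith) hx0) (sq_nonneg (1 - a))
      linarith
  have hApos : 0 < (S - (S - 1) * a) - (S - 1) * (a - x) - c * (S - 1) ^ 2 * (1 - 2 * a) := by
    have haa : 0 < a * (1 - a) := mul_pos hy0 h1a
    nlinarith [hA]
  have hrhs : 0 ≤ k' * (S - 1) ^ 2 * (a * (1 - a)) := by
    have haa : 0 ≤ a * (1 - a) := le_of_lt (mul_pos hy0 h1a)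
    positivity
  by_contra h
  push_neg at h
  nlinarith [mul_neg_of_neg_of_pos h hApos]
end

section
/- Let S > 1 and define g : ℝ → ℝ by g(y) = 1 + (S−1)·y − S/(S − (S−1)·y), and set y* := (S − √S)/(S−1). Then g is strictly monotone increasing on the interval [0, y*] and strictly monotone decreasing on the interval [y*, 1]. -/
theorem stmt_15
    (S : ℝ) (hS : 1 < S)
    (g : ℝ → ℝ)
    (hg : g = fun y => 1 + (S - 1) * y - S / (S - (S - 1) * y))
    (ystar : ℝ) (hystar : ystar = (S - Real.sqrt S) / (S - 1)) :
    StrictMonoOn g (Set.Icc (0 : ℝ) ystar) ∧ StrictAntiOn g (Set.Icc ystar 1) := by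
  have hS1 : (0:ℝ) < S - 1 := by linarith
  have hS1' : S - 1 ≠ 0 := ne_of_gt hS1
  have hs1 : 1 < Real.sqrt S := by
    have h := Real.sqrt_lt_sqrt (by norm_num : (0:ℝ) ≤ 1) hS
    simpa using h
  have hsq : Real.sqrt S * Real.sqrt S = S := Real.mul_self_sqrt (by linarith)
  have hDstar : S - (S - 1) * ystar = Real.sqrt S := by
    rw [hystar]; field_simp; ring
  subst hg
  constructor
  · intro a ha b hb hab
    have hbstar : b ≤ ystar := hb.2
    have hDb : Real.sqrt S ≤ S - (S-1)*b := by nlinarith [hb.2]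
    have hDa : S - (S-1)*b < S - (S-1)*a := by nlinarith
    have hDb0 : 0 < S - (S-1)*b := by linarith
    have hDa0 : 0 < S - (S-1)*a := by linarith
    have key : (1 + (S - 1) * b - S / (S - (S - 1) * b))
        - (1 + (S - 1) * a - S / (S - (S - 1) * a))
        = ((S-1)*(b-a)*((S-(S-1)*a)*(S-(S-1)*b) - S))/((S-(S-1)*a)*(S-(S-1)*b)) := by
      field_simp
      ring
    have hprod : S < (S-(S-1)*a)*(S-(S-1)*b) := by nlinarith
    have hpos : 0 < ((S-1)*(b-a)*((S-(S-1)*a)*(S-(S-1)*b) - S))/((S-(S-1)*a)*(S-(S-1)*b)) := by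
      apply div_pos
      · apply mul_pos (mul_pos hS1 (by linarith)); linarith
      · exact mul_pos hDa0 hDb0
    simp only []
    linarith [key, hpos]
  · intro a ha b hb hab
    have hDa : S - (S-1)*a ≤ Real.sqrt S := by nlinarith [ha.1]
    have hDb : S - (S-1)*b < S - (S-1)*a := by nlinarith
    have hDb0 : 0 < S - (S-1)*b := by nlinarith [hb.2]
    have hDa0 : 0 < S - (S-1)*a := by linarith
    have key : (1 + (S - 1) * b - S / (S - (S - 1) * b))
        - (1 + (S - 1) * a - S / (S - (S - 1) * a))
        = ((S-1)*(b-a)*((S-(S-1)*a)*(S-(S-1)*b) - S))/((S-(S-1)*a)*(S-(S-1)*b)) := by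
      field_simp
      ring
    have hprod : (S-(S-1)*a)*(S-(S-1)*b) < S := by nlinarith
    have hneg : ((S-1)*(b-a)*((S-(S-1)*a)*(S-(S-1)*b) - S))/((S-(S-1)*a)*(S-(S-1)*b)) < 0 := by
      apply div_neg_of_neg_of_pos
      · have : 0 < (S-1)*(b-a) := mul_pos hS1 (by linarith)
        nlinarith
      · exact mul_pos hDa0 hDb0
    simp only []
    linarith [key, hneg]
end
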